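/- Each of the three ℝ-linear involutions α, β, γ of ℝ⁷ = ℝ³ ⊕ ℂ², given by α(x₁,x₂,x₃,z₁,z₂) = (x₁,x₂,x₃,−z₁,−z₂), β(x₁,x₂,x₃,z₁,z₂) = (x₁,−x₂,−x₃, i z₂, −i z₁), and γ(x₁,x₂,x₃,z₁,z₂) = (−x₁,x₂,−x₃, z̄₁, z̄₂), preserves the flat G₂ three-form: Φ₀(σu, σv, σw) = Φ₀(u, v, w) for σ ∈ {α, β, γ} and all u, v, w ∈ ℝ⁷. -/
import Mathlib


noncomputable section

/-- `tri i j k` is the 3-form `dxᵢ ∧ dxⱼ ∧ dxₖ` on `ℝ⁷` (0-based indices). -/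
def tri (i j k : Fin 7) (u v w : Fin 7 → ℝ) : ℝ :=
  u i * (v j * w k - v k * w j) - u j * (v i * w k - v k * w i)
    + u k * (v i * w j - v j * w i)

/-- The standard `G₂` three-form
`Φ₀ = dx₁₂₃ + dx₁₄₅ + dx₁₆₇ + dx₂₄₆ − dx₂₅₇ − dx₃₄₇ − dx₃₅₆` (written here
with 0-based indices). -/
def phi0 (u v w : Fin 7 → ℝ) : ℝ :=
  tri 0 1 2 u v w + tri 0 3 4 u v w + tri 0 5 6 u v w + tri 1 3 5 u v w
    - tri 1 4 6 u v w - tri 2 3 6 u v w - tri 2 4 5 u v w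

/-- The standard Euclidean inner product on `ℝ⁷`. -/
def ip (u v : Fin 7 → ℝ) : ℝ := ∑ i, u i * v i

/-- Components `(Φ₀)_{abc} = Φ₀(e_a, e_b, e_c)` of the three-form `Φ₀`. -/
def phi0c (a b c : Fin 7) : ℝ :=
  phi0 (Pi.single a 1) (Pi.single b 1) (Pi.single c 1)

/-- The contraction map `f_{Φ₀} : v ↦ v ⌟ Φ₀`, `(f_{Φ₀}(v))_{ab} = Φ₀(v, e_a, e_b)`. -/
def fmat (v : Fin 7 → ℝ) : Matrix (Fin 7) (Fin 7) ℝ :=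
  Matrix.of fun a b => phi0 v (Pi.single a 1) (Pi.single b 1)

/-- The cross product on `ℝ⁷` determined by `⟨u × v, w⟩ = Φ₀(u, v, w)`. -/
def cross7 (u v : Fin 7 → ℝ) : Fin 7 → ℝ := fun a => phi0 u v (Pi.single a 1)

/-- The involution `α(x₁,x₂,x₃,z₁,z₂) = (x₁,x₂,x₃,−z₁,−z₂)` of `ℝ⁷ = ℝ³ ⊕ ℂ²`,
where `z₁ = x₄ + i x₅`, `z₂ = x₆ + i x₇` (0-based coordinates). -/
def mapA (u : Fin 7 → ℝ) : Fin 7 → ℝ :=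
  ![u 0, u 1, u 2, -u 3, -u 4, -u 5, -u 6]

/-- The involution `β(x₁,x₂,x₃,z₁,z₂) = (x₁,−x₂,−x₃, i z₂, −i z₁)`. -/
def mapB (u : Fin 7 → ℝ) : Fin 7 → ℝ :=
  ![u 0, -u 1, -u 2, -u 6, u 5, u 4, -u 3]

/-- The involution `γ(x₁,x₂,x₃,z₁,z₂) = (−x₁,x₂,−x₃, conj z₁, conj z₂)`. -/
def mapC (u : Fin 7 → ℝ) : Fin 7 → ℝ :=
  ![-u 0, u 1, -u 2, u 3, -u 4, u 5, -u 6]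

/-- each of the involutions `α`, `β`, `γ` preserves the flat `G₂`
three-form `Φ₀`. -/
lemma vec5 (a b c d e f g : ℝ) : ![a,b,c,d,e,f,g] 5 = f := rfl
lemma vec6 (a b c d e f g : ℝ) : ![a,b,c,d,e,f,g] 6 = g := rfl

set_option maxHeartbeats 2000000 in
theorem stmt14 : ∀ u v w : Fin 7 → ℝ,
    phi0 (mapA u) (mapA v) (mapA w) = phi0 u v w ∧
    phi0 (mapB u) (mapB v) (mapB w) = phi0 u v w ∧
    phi0 (mapC u) (mapC v) (mapC w) = phi0 u v w := by
  intro u v w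
  refine ⟨?_, ?_, ?_⟩ <;>
    simp [phi0, tri, mapA, mapB, mapC, vec5, vec6] <;> ring
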